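/- Let Ψ ⊆ ℝ^p. For each ψ ∈ Ψ let f_ψ : ℝ^m → [0,∞) be measurable with 0 < L(ψ) := ∫_{ℝ^m} f_ψ(y) dy < ∞ and predictive density p_ψ := f_ψ / L(ψ). Assume p_ψ is unimodal: there is ỹ(ψ) ∈ ℝ^m which is the unique global maximizer of p_ψ, with p_ψ(ỹ(ψ)) > 0. Define the linear map g_ψ : ℝ^m → ℝ^m by g_ψ(y) = (p_ψ(ỹ(ψ)))^{1/m} · y. Then: (i) g_ψ is a bijective linear map with |det Dg_ψ| = p_ψ(ỹ(ψ)); (ii) the transformed predictive density q_ψ(v) := p_ψ(g_ψ⁻¹(v)) · |det Dg_ψ|⁻¹ attains its unique maximum at ṽ(ψ) := g_ψ(ỹ(ψ)); and (iii) the canonical property holds: f_ψ(ỹ(ψ)) · |det Dg_ψ|⁻¹ = L(ψ) for all ψ ∈ Ψ. In particular, a canonical scale always exists when the predictive likelihood is unimodal. -/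

import Mathlib

open MeasureTheory

/-- The scalar-multiplication (linear) change of scale used in the proof of
Theorem 3.1: `y ↦ c • y` on `ℝ^m`, as a linear map. -/
noncomputable def scaleLinMap (m : ℕ) (c : ℝ) : (Fin m → ℝ) →ₗ[ℝ] (Fin m → ℝ) :=
  c • LinearMap.id

/-- Theorem 3.1 (existence of a canonical scale): if the predictive density
`pd ψ = f ψ / L ψ` is unimodal with unique global maximizer `ỹ ψ` at which it
is positive, then the linear scale `g_ψ(y) = (pd ψ (ỹ ψ))^(1/m) • y` is
(i) bijective with `|det D g_ψ| = pd ψ (ỹ ψ)`, (ii) the transformed predictive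
density `v ↦ pd ψ (g_ψ⁻¹ v) · |det D g_ψ|⁻¹` attains its unique maximum at
`ṽ ψ = g_ψ (ỹ ψ)`, and (iii) the canonical property
`f ψ (ỹ ψ) · |det D g_ψ|⁻¹ = L ψ` holds for all `ψ ∈ Ψ`. -/
theorem canonical_scale_exists {p m : ℕ} (hm : 0 < m) (Ψ : Set (Fin p → ℝ))
    (f : (Fin p → ℝ) → (Fin m → ℝ) → ℝ)
    (hf_nonneg : ∀ ψ ∈ Ψ, ∀ y, 0 ≤ f ψ y)
    (hf_meas : ∀ ψ ∈ Ψ, Measurable (f ψ))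
    (hf_int : ∀ ψ ∈ Ψ, Integrable (f ψ))
    (L : (Fin p → ℝ) → ℝ)
    (hL : ∀ ψ ∈ Ψ, L ψ = ∫ y, f ψ y)
    (hL_pos : ∀ ψ ∈ Ψ, 0 < L ψ)
    (pd : (Fin p → ℝ) → (Fin m → ℝ) → ℝ)
    (hpd : ∀ ψ ∈ Ψ, ∀ y, pd ψ y = f ψ y / L ψ)
    (ytil : (Fin p → ℝ) → (Fin m → ℝ))
    (h_unimodal : ∀ ψ ∈ Ψ, ∀ y, y ≠ ytil ψ → pd ψ y < pd ψ (ytil ψ))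
    (h_mode_pos : ∀ ψ ∈ Ψ, 0 < pd ψ (ytil ψ)) :
    ∀ ψ ∈ Ψ,
      -- (i) bijective linear map with absolute Jacobian determinant `pd ψ (ỹ ψ)`
      (Function.Bijective (fun y : Fin m → ℝ => (pd ψ (ytil ψ)) ^ ((1 : ℝ) / m) • y) ∧
        |LinearMap.det (scaleLinMap m ((pd ψ (ytil ψ)) ^ ((1 : ℝ) / m)))| = pd ψ (ytil ψ)) ∧
      -- (ii) the transformed predictive density has its unique maximum at `ṽ ψ = g_ψ (ỹ ψ)`
      (∀ v : Fin m → ℝ, v ≠ (pd ψ (ytil ψ)) ^ ((1 : ℝ) / m) • ytil ψ →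
        pd ψ (((pd ψ (ytil ψ)) ^ ((1 : ℝ) / m))⁻¹ • v) *
            |LinearMap.det (scaleLinMap m ((pd ψ (ytil ψ)) ^ ((1 : ℝ) / m)))|⁻¹ <
          pd ψ (((pd ψ (ytil ψ)) ^ ((1 : ℝ) / m))⁻¹ •
              ((pd ψ (ytil ψ)) ^ ((1 : ℝ) / m) • ytil ψ)) *
            |LinearMap.det (scaleLinMap m ((pd ψ (ytil ψ)) ^ ((1 : ℝ) / m)))|⁻¹) ∧
      -- (iii) the canonical property
      f ψ (ytil ψ) * |LinearMap.det (scaleLinMap m ((pd ψ (ytil ψ)) ^ ((1 : ℝ) / m)))|⁻¹ = L ψ := by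
  intro ψ hψ
  set t := pd ψ (ytil ψ) with ht
  have htpos : 0 < t := h_mode_pos ψ hψ
  set c := t ^ ((1 : ℝ) / m) with hc
  have hcpos : 0 < c := Real.rpow_pos_of_pos htpos _
  have hcne : c ≠ 0 := ne_of_gt hcpos
  have hdet : |LinearMap.det (scaleLinMap m c)| = t := by
    have h1 : LinearMap.det (scaleLinMap m c) = c ^ m := by
      simp [scaleLinMap, LinearMap.det_smul]
    rw [h1, abs_of_pos (pow_pos hcpos m)]
    rw [hc, ← Real.rpow_natCast (t ^ ((1:ℝ)/m)) m, ← Real.rpow_mul htpos.le]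
    rw [one_div, inv_mul_cancel₀ (by exact_mod_cast hm.ne' : (m:ℝ) ≠ 0), Real.rpow_one]
  refine ⟨⟨?_, hdet⟩, ?_, ?_⟩
  · constructor
    · intro a b hab
      simpa [smul_right_injective _ hcne] using smul_right_injective (Fin m → ℝ) hcne hab
    · intro v
      exact ⟨c⁻¹ • v, by simp [smul_smul, mul_inv_cancel₀ hcne]⟩
  · intro v hv
    have hback : c⁻¹ • (c • ytil ψ) = ytil ψ := by
      simp [smul_smul, inv_mul_cancel₀ hcne]
    rw [hback]
    have hne : c⁻¹ • v ≠ ytil ψ := by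
      intro h
      apply hv
      have := congrArg (fun w => c • w) h
      simpa [smul_smul, mul_inv_cancel₀ hcne] using this
    have hlt := h_unimodal ψ hψ _ hne
    have hpos : 0 < |LinearMap.det (scaleLinMap m c)|⁻¹ := by
      rw [hdet]; exact inv_pos.mpr htpos
    exact mul_lt_mul_of_pos_right hlt hpos
  · rw [hdet]
    have : f ψ (ytil ψ) = t * L ψ := by
      have := hpd ψ hψ (ytil ψ)
      rw [← ht] at this
      rw [this, div_mul_cancel₀ _ (hL_pos ψ hψ).ne']
    rw [this]
    field_simp [htpos.ne']
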